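/- The clause F2 is satisfiable together with the CHC encoding of programs P1 and P2; semantically: for all integers a, b, x, y, x1, y1, x2, y2, if s11(a,b,x,y,x1,y1) and s21(a,b,x,y,x2,y2) both hold, then it is not the case that x2 ≤ x1 - 1, i.e., x2 ≥ x1. -/
import Mathlib


/-- CHC encoding of the loop of program P1. -/
inductive s12 : ℤ → ℤ → ℤ → ℤ → ℤ → ℤ → ℤ → ℤ → Prop
  | base (a b x y : ℤ) (h : a ≥ b) : s12 a b x y a b x y
  | step (a b x y a2 b2 x2 y2 : ℤ) (h : a ≤ b - 1)
      (ih : s12 (a + 1) b (x + a) (y + x + a) a2 b2 x2 y2) :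
      s12 a b x y a2 b2 x2 y2

/-- CHC encoding of the loop of program P2. -/
inductive s23 : ℤ → ℤ → ℤ → ℤ → ℤ → ℤ → ℤ → ℤ → Prop
  | base (a b x y : ℤ) (h : a ≥ b - 1) : s23 a b x y (a + 1) b x (y + x)
  | step (a b x y a2 b2 x2 y2 : ℤ) (h : a ≤ b - 2)
      (ih : s23 (a + 1) b (x + a + 1) (y + x) a2 b2 x2 y2) :
      s23 a b x y a2 b2 x2 y2

/-- CHC encoding of the body of program P2. -/
def s22 (a b x y a2 b2 x2 y2 : ℤ) : Prop :=
  (a ≥ b ∧ a2 = a ∧ b2 = b ∧ x2 = x ∧ y2 = y) ∨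
  (a ≤ b - 1 ∧ s23 a b (x + a) y a2 b2 x2 y2)

/-- Input/output relation of program P1. -/
def s11 (a b x y x2 y2 : ℤ) : Prop := ∃ a2 b2, s12 a b x y a2 b2 x2 y2

/-- Input/output relation of program P2. -/
def s21 (a b x y x2 y2 : ℤ) : Prop := ∃ a2 b2, s22 a b x y a2 b2 x2 y2

lemma s12_x (a b x y a2 b2 x2 y2 : ℤ) (h : s12 a b x y a2 b2 x2 y2) :
    (a ≥ b ∧ x2 = x) ∨ (a < b ∧ 2 * x2 = 2 * x + b * (b - 1) - a * (a - 1)) := by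
  induction h with
  | base a b x y h => exact Or.inl ⟨h, rfl⟩
  | step a b x y a2 b2 x2 y2 h ih ihr =>
    right
    rcases ihr with ⟨h1, h2⟩ | ⟨h1, h2⟩
    · have hb : b = a + 1 := by omega
      subst hb
      exact ⟨by omega, by linear_combination 2 * h2⟩
    · exact ⟨by omega, by linear_combination h2⟩

lemma s23_x (a b x y a2 b2 x2 y2 : ℤ) (h : s23 a b x y a2 b2 x2 y2) :
    (a ≥ b - 1 ∧ x2 = x) ∨
    (a ≤ b - 2 ∧ 2 * x2 = 2 * x + b * (b - 1) - (a + 1) * a) := by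
  induction h with
  | base a b x y h => exact Or.inl ⟨h, rfl⟩
  | step a b x y a2 b2 x2 y2 h ih ihr =>
    right
    rcases ihr with ⟨h1, h2⟩ | ⟨h1, h2⟩
    · have hb : b = a + 2 := by omega
      subst hb
      exact ⟨by omega, by linear_combination 2 * h2⟩
    · exact ⟨by omega, by linear_combination h2⟩

/-- Clause F2 is satisfiable together with the CHC encoding of P1 and P2. -/
theorem F2_satisfiable (a b x y x1 y1 x2 y2 : ℤ)
    (h1 : s11 a b x y x1 y1) (h2 : s21 a b x y x2 y2) : ¬ (x2 ≤ x1 - 1) := by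
  obtain ⟨a1', b1', h1⟩ := h1
  obtain ⟨a2', b2', h2⟩ := h2
  have H1 := s12_x _ _ _ _ _ _ _ _ h1
  rcases h2 with ⟨hab, _, _, hx2, _⟩ | ⟨hab, h23⟩
  · rcases H1 with ⟨_, hx1⟩ | ⟨hlt, _⟩
    · omega
    · omega
  · have H2 := s23_x _ _ _ _ _ _ _ _ h23
    rcases H1 with ⟨hge, _⟩ | ⟨hlt, hx1⟩
    · omega
    · rcases H2 with ⟨h1', hx2⟩ | ⟨h1', hx2⟩
      · have hb : b = a + 1 := by omega
        subst hb
        have : 2 * x1 = 2 * x + 2 * a := by linear_combination hx1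
        omega
      · have : 2 * x2 = 2 * x1 := by linear_combination hx2 - hx1
        omega
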